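/- Let K : ℝ² → ℝ be measurable with α_{p₀}(K) > -∞ for some p₀ > 1 and α_1(K) > α_{p₀}(K) finite. Then for every ε > 0 there exists p* ∈ (1, p₀) such that α_{p*}(K) ≥ α_1(K) - ε. Consequently α_p(K) → α_1(K) as p → 1⁺. -/

import Mathlib

open MeasureTheory Real Filter
noncomputable section
abbrev E2 : Type := EuclideanSpace ℝ (Fin 2)
/-- Classical Laplacian on ℝ². -/
def lap (u : E2 → ℝ) (x : E2) : ℝ :=
  ∑ i : Fin 2, fderiv ℝ (fun y => fderiv ℝ u y (EuclideanSpace.single i 1)) x (EuclideanSpace.single i 1)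
/-- The set of admissible exponents α in the definition of α_p(K). -/
def alphaSet (K : E2 → ℝ) (p : ℝ) : Set ℝ :=
  {α : ℝ | Integrable (fun x : E2 => |K x| ^ p * (1 + ‖x‖) ^ (2*α*p + 2*(p-1)))}
/-- α_p(K), with the convention sup ∅ = -∞ (⊥ in `EReal`). -/
def alphaP (K : E2 → ℝ) (p : ℝ) : EReal :=
  sSup ((fun a : ℝ => (a : EReal)) '' alphaSet K p)

open scoped ENNReal in
lemma holder_integrable {α : Type*} [MeasurableSpace α] {μ : Measure α} {f g : α → ℝ}
    (hf : Integrable f μ) (hg : Integrable g μ)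
    (hf0 : ∀ x, 0 ≤ f x) (hg0 : ∀ x, 0 ≤ g x) {θ : ℝ} (h0 : 0 < θ) (h1 : θ < 1) :
    Integrable (fun x => f x ^ θ * g x ^ (1 - θ)) μ := by
  have h1' : 0 < 1 - θ := by linarith
  have hmeas : AEStronglyMeasurable (fun x => f x ^ θ * g x ^ (1 - θ)) μ :=
    ((hf.aestronglyMeasurable.aemeasurable.pow_const _).mul
      (hg.aestronglyMeasurable.aemeasurable.pow_const _)).aestronglyMeasurable
  refine ⟨hmeas, ?_⟩
  have hnn : 0 ≤ᵐ[μ] fun x => f x ^ θ * g x ^ (1 - θ) :=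
    Filter.Eventually.of_forall fun x =>
      mul_nonneg (rpow_nonneg (hf0 x) _) (rpow_nonneg (hg0 x) _)
  rw [hasFiniteIntegral_iff_ofReal hnn]
  set F : α → ℝ≥0∞ := fun x => ENNReal.ofReal (f x)
  set G : α → ℝ≥0∞ := fun x => ENNReal.ofReal (g x)
  have hFmeas : AEMeasurable F μ := hf.aestronglyMeasurable.aemeasurable.ennreal_ofReal
  have hGmeas : AEMeasurable G μ := hg.aestronglyMeasurable.aemeasurable.ennreal_ofReal
  have hpq : (1/θ).HolderConjugate (1/(1-θ)) := by
    constructor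
    · rw [one_div, one_div, inv_inv, inv_inv]; ring
    · positivity
    · positivity
  have key := ENNReal.lintegral_mul_le_Lp_mul_Lq μ hpq
    (f := fun x => F x ^ θ) (g := fun x => G x ^ (1-θ))
    (hFmeas.pow_const _) (hGmeas.pow_const _)
  have e1 : ∀ x, (F x ^ θ) ^ (1/θ) = F x := by
    intro x; rw [← ENNReal.rpow_mul, mul_one_div, div_self h0.ne', ENNReal.rpow_one]
  have e2 : ∀ x, (G x ^ (1-θ)) ^ (1/(1-θ)) = G x := by
    intro x; rw [← ENNReal.rpow_mul, mul_one_div, div_self h1'.ne', ENNReal.rpow_one]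
  simp only [Pi.mul_apply, e1, e2] at key
  calc ∫⁻ x, ENNReal.ofReal (f x ^ θ * g x ^ (1-θ)) ∂μ
      = ∫⁻ x, F x ^ θ * G x ^ (1-θ) ∂μ := by
        refine lintegral_congr fun x => ?_
        rw [ENNReal.ofReal_mul (rpow_nonneg (hf0 x) _),
          ENNReal.ofReal_rpow_of_nonneg (hf0 x) h0.le,
          ENNReal.ofReal_rpow_of_nonneg (hg0 x) h1'.le]
    _ ≤ (∫⁻ x, F x ∂μ) ^ (1/(1/θ)) * (∫⁻ x, G x ∂μ) ^ (1/(1/(1-θ))) := key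
    _ < ⊤ := by
        rw [one_div_one_div, one_div_one_div]
        exact ENNReal.mul_lt_top
          (ENNReal.rpow_lt_top_of_nonneg h0.le hf.lintegral_lt_top.ne)
          (ENNReal.rpow_lt_top_of_nonneg h1'.le hg.lintegral_lt_top.ne)

lemma alphaSet_mono (K : E2 → ℝ) (hmeas : Measurable K) {p α α' : ℝ} (hp : 0 < p)
    (h : α ∈ alphaSet K p) (h' : α' ≤ α) : α' ∈ alphaSet K p := by
  refine Integrable.mono' h ?_ (Filter.Eventually.of_forall fun x => ?_)
  · exact ((hmeas.abs.pow_const p).mul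
      ((measurable_const.add measurable_norm).pow_const _)).aestronglyMeasurable
  · rw [Real.norm_eq_abs, abs_of_nonneg (by positivity)]
    refine mul_le_mul_of_nonneg_left ?_ (by positivity)
    refine Real.rpow_le_rpow_of_exponent_le (by simp [norm_nonneg]) ?_
    nlinarith [norm_nonneg x]

lemma interp_mem (K : E2 → ℝ) {p₀ β₁ β₂ p : ℝ} (hp₀ : 1 < p₀)
    (h1 : β₁ ∈ alphaSet K 1) (h2 : β₂ ∈ alphaSet K p₀) (hp1 : 1 < p) (hpp : p < p₀) :
    (2*β₁*((p₀-p)/(p₀-1)) + (2*β₂*p₀+2*(p₀-1))*(1-(p₀-p)/(p₀-1)) - 2*(p-1))/(2*p)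
      ∈ alphaSet K p := by
  have hp01 : (0:ℝ) < p₀ - 1 := by linarith
  set θ : ℝ := (p₀-p)/(p₀-1) with hθdef
  set A : ℝ := 2*β₂*p₀+2*(p₀-1) with hAdef
  set lam : ℝ := (2*β₁*θ + A*(1-θ) - 2*(p-1))/(2*p) with hlamdef
  have hθ0 : 0 < θ := div_pos (by linarith) hp01
  have hθ1 : θ < 1 := by rw [div_lt_one hp01]; linarith
  have hE : 2*lam*p + 2*(p-1) = 2*β₁*θ + A*(1-θ) := by
    rw [hlamdef]; field_simp; ring
  have hpθ : θ + p₀*(1-θ) = p := by rw [hθdef]; field_simp; ring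
  have hf : Integrable (fun x : E2 => |K x| * (1 + ‖x‖) ^ (2*β₁)) := by
    have := h1
    simp only [alphaSet, Set.mem_setOf_eq] at this
    refine this.congr (Filter.Eventually.of_forall fun x => ?_)
    norm_num
  have hg : Integrable (fun x : E2 => |K x| ^ p₀ * (1 + ‖x‖) ^ A) := h2
  have key := holder_integrable hf hg
    (fun x => mul_nonneg (abs_nonneg _) (rpow_nonneg (by positivity) _))
    (fun x => mul_nonneg (rpow_nonneg (abs_nonneg _) _) (rpow_nonneg (by positivity) _))
    hθ0 hθ1
  refine key.congr (Filter.Eventually.of_forall fun x => ?_)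
  have hw : (0:ℝ) < 1 + ‖x‖ := by positivity
  dsimp only
  have hK : (0:ℝ) ≤ |K x| := abs_nonneg _
  rw [Real.mul_rpow hK (rpow_nonneg hw.le _),
    Real.mul_rpow (rpow_nonneg hK _) (rpow_nonneg hw.le _),
    ← Real.rpow_mul hw.le, ← Real.rpow_mul hw.le, ← Real.rpow_mul hK,
    mul_mul_mul_comm, ← Real.rpow_add' hK (by rw [hpθ]; linarith), ← Real.rpow_add hw,
    hpθ, hE]

lemma mem_sub (K : E2 → ℝ) {p α δ : ℝ} (hp : 1 < p) (hα : α ∈ alphaSet K p)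
    (hδ : 0 < δ) : α - δ ∈ alphaSet K 1 := by
  have hp0 : (0:ℝ) < p := by linarith
  have hp1 : (0:ℝ) < p - 1 := by linarith
  set r : ℝ := 2 + 2*δ*p/(p-1) with hrdef
  have hg : Integrable (fun x : E2 => (1 + ‖x‖) ^ (-r)) := by
    apply integrable_one_add_norm (E := E2)
    have : Module.finrank ℝ E2 = 2 := by simp
    rw [this, hrdef]
    have : 0 < 2*δ*p/(p-1) := by positivity
    push_cast; linarith
  have hθ0 : 0 < 1/p := by positivity
  have hθ1 : 1/p < 1 := by rw [div_lt_one hp0]; linarith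
  have key := holder_integrable hα hg
    (fun x => mul_nonneg (rpow_nonneg (abs_nonneg _) _) (rpow_nonneg (by positivity) _))
    (fun x => rpow_nonneg (by positivity) _)
    hθ0 hθ1
  refine Set.mem_setOf_eq ▸ key.congr (Filter.Eventually.of_forall fun x => ?_)
  have hw : (0:ℝ) < 1 + ‖x‖ := by positivity
  have hK : (0:ℝ) ≤ |K x| := abs_nonneg _
  dsimp only
  rw [Real.mul_rpow (rpow_nonneg hK _) (rpow_nonneg hw.le _),
    ← Real.rpow_mul hw.le, ← Real.rpow_mul hw.le, ← Real.rpow_mul hK,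
    mul_assoc, ← Real.rpow_add hw]
  have e1 : p * (1/p) = (1:ℝ) := by field_simp
  have e2 : (2*α*p + 2*(p-1)) * (1/p) + -r * (1 - 1/p) = 2*(α-δ)*1 + 2*(1-1:ℝ) := by
    rw [hrdef]; field_simp; ring
  rw [e1, e2]

lemma le_alphaP {K : E2 → ℝ} {p α : ℝ} (h : α ∈ alphaSet K p) :
    (α : EReal) ≤ alphaP K p := le_sSup ⟨α, h, rfl⟩

lemma alphaP_le {K : E2 → ℝ} {p a1 : ℝ} (ha1 : alphaP K 1 = (a1 : EReal)) (hp : 1 < p) :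
    alphaP K p ≤ (a1 : EReal) := by
  refine sSup_le ?_
  rintro _ ⟨α, hα, rfl⟩
  rw [EReal.coe_le_coe_iff]
  by_contra hc
  push_neg at hc
  have hδ : 0 < (α - a1)/2 := by linarith
  have := le_alphaP (mem_sub K hp hα hδ)
  rw [ha1, EReal.coe_le_coe_iff] at this
  linarith

theorem stmt1 (K : E2 → ℝ) (hmeas : Measurable K) (p₀ : ℝ) (hp₀ : 1 < p₀)
    (hbot : alphaP K p₀ ≠ ⊥) (a1 : ℝ) (ha1 : alphaP K 1 = (a1 : EReal))
    (hlt : alphaP K p₀ < (a1 : EReal)) :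
    (∀ ε : ℝ, 0 < ε → ∃ pstar : ℝ, 1 < pstar ∧ pstar < p₀ ∧
      ((a1 - ε : ℝ) : EReal) ≤ alphaP K pstar) ∧
    Tendsto (fun p : ℝ => alphaP K p) (nhdsWithin 1 (Set.Ioi 1)) (nhds (a1 : EReal)) := by
  -- β₂ exists
  obtain ⟨β₂, hβ₂⟩ : ∃ β₂, β₂ ∈ alphaSet K p₀ := by
    by_contra hc
    push_neg at hc
    apply hbot
    have : alphaSet K p₀ = ∅ := Set.eq_empty_iff_forall_notMem.2 hc
    rw [alphaP, this]
    simp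
  -- for each ε>0, a1 - ε ∈ alphaSet K 1
  have hmem1 : ∀ ε : ℝ, 0 < ε → (a1 - ε) ∈ alphaSet K 1 := by
    intro ε hε
    have hlt' : ((a1 - ε : ℝ) : EReal) < alphaP K 1 := by
      rw [ha1, EReal.coe_lt_coe_iff]; linarith
    obtain ⟨b, hb, hab⟩ := lt_sSup_iff.1 hlt'
    obtain ⟨c, hc, rfl⟩ := hb
    rw [EReal.coe_lt_coe_iff] at hab
    exact alphaSet_mono K hmeas one_pos hc hab.le
  -- key eventual bound
  have key : ∀ ε : ℝ, 0 < ε → ∀ᶠ p in nhdsWithin 1 (Set.Ioi 1),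
      1 < p ∧ p < p₀ ∧ ((a1 - ε : ℝ) : EReal) ≤ alphaP K p := by
    intro ε hε
    set β₁ : ℝ := a1 - ε/2 with hβ₁def
    have hβ₁ : β₁ ∈ alphaSet K 1 := hmem1 _ (by linarith)
    set A : ℝ := 2*β₂*p₀+2*(p₀-1) with hAdef
    set lam : ℝ → ℝ := fun p =>
      (2*β₁*((p₀-p)/(p₀-1)) + A*(1-(p₀-p)/(p₀-1)) - 2*(p-1))/(2*p) with hlamdef
    have hp01 : (p₀ - 1 : ℝ) ≠ 0 := by intro h; linarith [hp₀]
    have hcont : ContinuousAt lam 1 := by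
      apply ContinuousAt.div
      · fun_prop (disch := assumption)
      · fun_prop
      · norm_num
    have hlam1 : lam 1 = β₁ := by
      simp only [hlamdef]
      field_simp
      ring
    have h1 : ∀ᶠ p in nhds (1:ℝ), a1 - ε < lam p := by
      have : Tendsto lam (nhds 1) (nhds β₁) := by rw [← hlam1]; exact hcont
      exact this.eventually (eventually_gt_nhds (by rw [hβ₁def]; linarith))
    have h2 : Set.Ioo (1:ℝ) p₀ ∈ nhdsWithin 1 (Set.Ioi 1) :=
      Ioo_mem_nhdsGT_of_mem ⟨le_refl _, hp₀⟩
    filter_upwards [nhdsWithin_le_nhds h1, h2] with p hlp hpmem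
    refine ⟨hpmem.1, hpmem.2, ?_⟩
    have hmem : lam p ∈ alphaSet K p := interp_mem K hp₀ hβ₁ hβ₂ hpmem.1 hpmem.2
    calc ((a1 - ε : ℝ) : EReal) ≤ ((lam p : ℝ) : EReal) := by
          rw [EReal.coe_le_coe_iff]; exact hlp.le
      _ ≤ alphaP K p := le_alphaP hmem
  constructor
  · intro ε hε
    obtain ⟨p, hp⟩ := (key ε hε).exists
    exact ⟨p, hp.1, hp.2.1, hp.2.2⟩
  · rw [tendsto_order]
    constructor
    · intro b hb
      obtain ⟨c, hbc, hca⟩ := EReal.exists_between_coe_real hb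
      have hε : 0 < a1 - c := by
        rw [EReal.coe_lt_coe_iff] at hca; linarith
      filter_upwards [key _ hε] with p hp
      have : ((a1 - (a1 - c) : ℝ) : EReal) ≤ alphaP K p := hp.2.2
      calc b < (c : EReal) := hbc
        _ = ((a1 - (a1 - c) : ℝ) : EReal) := by norm_num
        _ ≤ alphaP K p := this
    · intro b hb
      filter_upwards [self_mem_nhdsWithin] with p hp
      exact lt_of_le_of_lt (alphaP_le ha1 hp) hb
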